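/- Let $\phi$ be the golden ratio, and suppose $c_1,\dots,c_n \in \{-2,-1,0,1,2\}$ satisfy $\sum_{i=1}^n c_i \phi^{n-i} = 0$. Then for every $m \leq n$ we have $\sum_{i=1}^m c_i \phi^{m-i} \in (-2\phi, 2\phi)$. -/

import Mathlib

noncomputable def phi : ℝ := (1 + Real.sqrt 5) / 2

lemma phi_pos : 0 < phi := by
  unfold phi
  have := Real.sqrt_nonneg 5
  linarith

lemma phi_sq : phi ^ 2 = phi + 1 := by
  unfold phi
  have h : Real.sqrt 5 ^ 2 = 5 := Real.sq_sqrt (by norm_num)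
  ring_nf
  nlinarith [h]

/-- If a `{-2,...,2}`-polynomial in `φ` vanishes then all its partial sums lie
in `(-2φ, 2φ)`. -/
theorem stmt_4 (n : ℕ) (c : ℕ → ℤ) (hc : ∀ i, c i ∈ Set.Icc (-2 : ℤ) 2)
    (hzero : ∑ i ∈ Finset.Icc 1 n, (c i : ℝ) * phi ^ (n - i) = 0) :
    ∀ m ≤ n, ∑ i ∈ Finset.Icc 1 m, (c i : ℝ) * phi ^ (m - i) ∈
      Set.Ioo (-(2 * phi)) (2 * phi) := by
  set S : ℕ → ℝ := fun m => ∑ i ∈ Finset.Icc 1 m, (c i : ℝ) * phi ^ (m - i) with hS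
  have hstep : ∀ m, S (m + 1) = phi * S m + c (m + 1) := by
    intro m
    have h1 : S (m + 1) =
        (∑ i ∈ Finset.Icc 1 m, (c i : ℝ) * phi ^ (m + 1 - i)) +
          (c (m + 1) : ℝ) * phi ^ (m + 1 - (m + 1)) := by
      simp only [hS]
      rw [Finset.sum_Icc_succ_top (by omega : 1 ≤ m + 1)]
    rw [h1]
    simp only [Nat.sub_self, pow_zero, mul_one]
    congr 1
    rw [Finset.mul_sum]
    apply Finset.sum_congr rfl
    intro i hi
    have hi' : i ≤ m := (Finset.mem_Icc.mp hi).2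
    have : m + 1 - i = (m - i) + 1 := by omega
    rw [this, pow_succ]
    ring
  have habs : ∀ k m, m + k ≤ n → 2 * phi ≤ |S m| → 2 * phi ≤ |S (m + k)| := by
    intro k
    induction k with
    | zero => intro m _ h; simpa using h
    | succ k ih =>
      intro m hmk h
      have h' : 2 * phi ≤ |S (m + k)| := ih m (by omega) h
      have key : 2 * phi ≤ |S (m + k + 1)| := by
        have hrec := hstep (m + k)
        have hc1 := (hc (m + k + 1)).1
        have hc2 := (hc (m + k + 1)).2
        have hc1' : (-2 : ℝ) ≤ (c (m + k + 1) : ℝ) := by exact_mod_cast hc1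
        have hc2' : ((c (m + k + 1) : ℝ)) ≤ 2 := by exact_mod_cast hc2
        have hsq := phi_sq
        have hp := phi_pos
        rcases le_abs'.mp h' with hpos | hneg
        · -- S (m+k) ≤ -2φ
          have : S (m + k + 1) ≤ -(2 * phi) := by nlinarith
          calc 2 * phi ≤ -(S (m + k + 1)) := by linarith
            _ ≤ |S (m + k + 1)| := neg_le_abs _
        · -- 2φ ≤ S (m+k)
          have : 2 * phi ≤ S (m + k + 1) := by nlinarith
          exact this.trans (le_abs_self _)
      exact key
  intro m hm
  by_contra hcon
  have hSm : 2 * phi ≤ |S m| := by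
    simp only [Set.mem_Ioo, not_and_or, not_lt] at hcon
    rcases hcon with h | h
    · calc 2 * phi ≤ -(S m) := by linarith
        _ ≤ |S m| := neg_le_abs _
    · exact h.trans (le_abs_self _)
  have := habs (n - m) m (by omega) hSm
  rw [show m + (n - m) = n by omega] at this
  have hn : S n = 0 := hzero
  rw [hn] at this
  rw [abs_zero] at this
  have := phi_pos
  linarith
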